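/- The generating function identity: in (ℤ[T])[[u]], Σ_{n≥0} L_n(T) u^n = (1 - Σ_{k≥1} ε_{k-1}(T) (uT²)^k)^{-1}, where L_n(T) = T^(2n) L̃_n(T). -/
import Mathlib


open Polynomial Finset

noncomputable def eps (k : ℕ) : Polynomial ℤ :=
  ∏ i ∈ Finset.range k, (1 + X ^ (2 * i + 1))

/-- with `L_n(T) = T^(2n) L̃_n(T)`, in `(ℤ[T])[[u]]` one has
`Σ_{n≥0} L_n(T) uⁿ = (1 - Σ_{k≥1} ε_{k-1}(T) (uT²)^k)⁻¹`, stated as the product identity. -/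
theorem stmt_14 (L : ℕ → Polynomial ℤ) (hL0 : L 0 = 1)
    (hL : ∀ n : ℕ, 1 ≤ n → L n = ∑ k ∈ Finset.range n, eps (n - 1 - k) * L k) :
    (PowerSeries.mk fun k => if k = 0 then 1 else -(eps (k - 1) * X ^ (2 * k))) *
      (PowerSeries.mk fun n => X ^ (2 * n) * L n) = 1 := by
  refine PowerSeries.ext fun n => ?_
  rw [PowerSeries.coeff_mul, Finset.Nat.sum_antidiagonal_eq_sum_range_succ_mk]
  rcases Nat.eq_zero_or_pos n with rfl | hn
  · simp [hL0]
  · rw [PowerSeries.coeff_one, if_neg hn.ne']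
    rw [Finset.sum_range_succ']
    simp only [PowerSeries.coeff_mk, if_pos rfl, Nat.sub_zero, one_mul]
    rw [hL n hn]
    simp only [if_true, one_mul, Nat.add_sub_cancel]
    rw [Finset.mul_sum, ← Finset.sum_range_reflect (fun i => X ^ (2*n) * (eps (n-1-i) * L i)) n,
        ← Finset.sum_add_distrib]
    apply Finset.sum_eq_zero
    intro k hk
    simp only [Finset.mem_range] at hk
    rw [if_neg (Nat.succ_ne_zero k)]
    rw [show n - 1 - (n - 1 - k) = k by omega, show n - (k+1) = n - 1 - k by omega]
    rw [show 2*n = 2*(k+1) + 2*(n-1-k) by omega, pow_add]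
    ring
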